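/- Assume the finite-dimensional Hypothesis H (∫₀^∞ tr(e^{sA}Qe^{sAᵀ})ds < ∞ and Q∞ invertible) and assume AQ = QAᵀ. Then Q is invertible and every eigenvalue of A has negative real part; in particular ker(A) = {0}. -/

import Mathlib

/-!
STATEMENT 19.  Finite-dimensional setting: A, Q real d×d matrices, Q symmetric positive
semidefinite.  Assume Hypothesis H (∫₀^∞ tr(e^{sA}Qe^{sAᵀ})ds < ∞ and
Q∞ = ∫₀^∞ e^{sA}Qe^{sAᵀ}ds invertible) and assume AQ = QAᵀ.  Then Q is invertible and
every eigenvalue of A (root of its characteristic polynomial) has negative real part;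
in particular ker(A) = {0}.
-/

open MeasureTheory ProbabilityTheory Matrix
open scoped ENNReal Classical

noncomputable section

/-- `e^{sA} Q e^{sAᵀ}`. -/
def QsMat {d : ℕ} (A Q : Matrix (Fin d) (Fin d) ℝ) (s : ℝ) : Matrix (Fin d) (Fin d) ℝ :=
  NormedSpace.exp (s • A) * Q * NormedSpace.exp (s • Aᵀ)

/-- `Q∞ = ∫₀^∞ e^{sA} Q e^{sAᵀ} ds` (entrywise integral). -/
def QinfMat {d : ℕ} (A Q : Matrix (Fin d) (Fin d) ℝ) : Matrix (Fin d) (Fin d) ℝ :=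
  Matrix.of fun i j => ∫ s in Set.Ioi (0:ℝ), QsMat A Q s i j

section aux
attribute [local instance] Matrix.linftyOpSemiNormedRing Matrix.linftyOpNormedRing
  Matrix.linftyOpNormedAlgebra

variable {d : ℕ}

lemma aux_exp_intertwine (X Y B : Matrix (Fin d) (Fin d) ℝ) (h : X * B = B * Y) :
    NormedSpace.exp X * B = B * NormedSpace.exp Y := by
  have hpow : ∀ n : ℕ, X ^ n * B = B * Y ^ n := by
    intro n
    induction n with
    | zero => simp
    | succ n ih =>
      rw [pow_succ, mul_assoc, h, ← mul_assoc, ih, mul_assoc, ← pow_succ]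
  simp only [NormedSpace.exp_eq_tsum ℝ]
  erw [← (NormedSpace.expSeries_summable' (𝕂 := ℝ) X).tsum_mul_right B,
    ← (NormedSpace.expSeries_summable' (𝕂 := ℝ) Y).tsum_mul_left B]
  exact tsum_congr fun n => by rw [smul_mul_assoc, hpow n, mul_smul_comm]

lemma aux_intertwine_smul (A Q : Matrix (Fin d) (Fin d) ℝ) (hcomm : A * Q = Q * Aᵀ) (t : ℝ) :
    (t • A) * Q = Q * (t • Aᵀ) := by
  rw [smul_mul_assoc, hcomm, mul_smul_comm]

lemma aux_QsMat_eq (A Q : Matrix (Fin d) (Fin d) ℝ) (hcomm : A * Q = Q * Aᵀ) (s : ℝ) :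
    QsMat A Q s = NormedSpace.exp ((2 * s) • A) * Q := by
  have h2 := aux_exp_intertwine _ _ _ (aux_intertwine_smul A Q hcomm s)
  have h3 := aux_exp_intertwine _ _ _ (aux_intertwine_smul A Q hcomm (2 * s))
  have hadd : NormedSpace.exp ((2 * s) • Aᵀ)
      = NormedSpace.exp (s • Aᵀ) * NormedSpace.exp (s • Aᵀ) := by
    rw [two_mul, add_smul]; exact NormedSpace.exp_add_of_commute (Commute.refl (s • Aᵀ))
  rw [QsMat, h2, mul_assoc, ← hadd, h3]

lemma aux_Qs_psd (A Q : Matrix (Fin d) (Fin d) ℝ) (hQ : Q.PosSemidef) (s : ℝ) :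
    (QsMat A Q s).PosSemidef := by
  have : QsMat A Q s
      = NormedSpace.exp (s • A) * Q * (NormedSpace.exp (s • A))ᴴ := by
    rw [QsMat]
    congr 1
    rw [conjTranspose_eq_transpose_of_trivial, ← Matrix.exp_transpose, transpose_smul]
  rw [this]
  exact hQ.mul_mul_conjTranspose_same _

lemma aux_cont (A Q : Matrix (Fin d) (Fin d) ℝ) : Continuous fun s : ℝ => QsMat A Q s := by
  have h1 : Continuous fun s : ℝ => NormedSpace.exp (s • A) :=
    NormedSpace.exp_continuous.comp (continuous_id.smul continuous_const)
  have h2 : Continuous fun s : ℝ => NormedSpace.exp (s • Aᵀ) :=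
    NormedSpace.exp_continuous.comp (continuous_id.smul continuous_const)
  exact (h1.mul continuous_const).mul h2

lemma aux_diag_nonneg {S : Matrix (Fin d) (Fin d) ℝ} (hS : S.PosSemidef) (k : Fin d) :
    0 ≤ S k k := by
  have := hS.dotProduct_mulVec_nonneg (Pi.single k 1)
  simpa [Matrix.mulVec_single, single_dotProduct] using this

lemma aux_trace_nonneg {S : Matrix (Fin d) (Fin d) ℝ} (hS : S.PosSemidef) :
    0 ≤ S.trace :=
  Finset.sum_nonneg fun k _ => aux_diag_nonneg hS k

lemma aux_diag_le_trace {S : Matrix (Fin d) (Fin d) ℝ} (hS : S.PosSemidef) (k : Fin d) :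
    S k k ≤ S.trace :=
  Finset.single_le_sum (f := fun k => S k k) (fun i _ => aux_diag_nonneg hS i)
    (Finset.mem_univ k)

lemma aux_entry_le_trace {S : Matrix (Fin d) (Fin d) ℝ} (hS : S.PosSemidef) (i j : Fin d) :
    |S i j| ≤ S.trace := by
  rcases eq_or_ne i j with rfl | hij
  · rw [abs_of_nonneg (aux_diag_nonneg hS i)]; exact aux_diag_le_trace hS i
  · have hsym : S j i = S i j := by
      have := hS.isHermitian.apply i j
      simpa using this
    have h1 := hS.dotProduct_mulVec_nonneg (Pi.single i 1 + Pi.single j 1)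
    have h2 := hS.dotProduct_mulVec_nonneg (Pi.single i 1 - Pi.single j 1)
    simp only [star_trivial, Matrix.mulVec_add, Matrix.mulVec_sub, Matrix.mulVec_single,
      dotProduct_add, add_dotProduct, dotProduct_sub, sub_dotProduct,
      single_dotProduct, mul_one, one_mul, MulOpposite.op_one, one_smul, Matrix.col_apply] at h1 h2
    have hti := aux_diag_le_trace hS i
    have htj := aux_diag_le_trace hS j
    rw [abs_le]
    constructor <;> nlinarith [hsym, aux_trace_nonneg hS]

lemma aux_entry_integrable (A Q : Matrix (Fin d) (Fin d) ℝ) (hQ : Q.PosSemidef)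
    (htr : IntegrableOn (fun s : ℝ => (QsMat A Q s).trace) (Set.Ioi 0)) (i j : Fin d) :
    IntegrableOn (fun s => QsMat A Q s i j) (Set.Ioi 0) := by
  have hc : Continuous fun s => QsMat A Q s i j :=
    (continuous_apply j).comp ((continuous_apply i).comp (aux_cont A Q))
  refine MeasureTheory.Integrable.mono htr hc.aestronglyMeasurable
    (Filter.Eventually.of_forall fun s => ?_)
  have hpsd := aux_Qs_psd A Q hQ s
  simp only [Real.norm_eq_abs]
  rw [abs_of_nonneg (aux_trace_nonneg hpsd)]
  exact aux_entry_le_trace hpsd i j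

lemma aux_Qinf_mulVec (A Q : Matrix (Fin d) (Fin d) ℝ) (hQ : Q.PosSemidef)
    (htr : IntegrableOn (fun s : ℝ => (QsMat A Q s).trace) (Set.Ioi 0)) (v : Fin d → ℝ) :
    (QinfMat A Q) *ᵥ v = fun i => ∫ s in Set.Ioi (0:ℝ), (QsMat A Q s *ᵥ v) i := by
  funext i
  have h0 : (QinfMat A Q *ᵥ v) i = ∑ j, (∫ s in Set.Ioi (0:ℝ), QsMat A Q s i j) * v j := rfl
  rw [h0]
  have h1 : ∀ j : Fin d, (∫ s in Set.Ioi (0:ℝ), QsMat A Q s i j) * v j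
      = ∫ s in Set.Ioi (0:ℝ), QsMat A Q s i j * v j := fun j =>
    (integral_mul_const (v j) _).symm
  rw [Finset.sum_congr rfl fun j _ => h1 j,
    ← integral_finset_sum _ fun j _ => (aux_entry_integrable A Q hQ htr i j).mul_const (v j)]
  rfl

lemma aux_eval_charpoly (M : Matrix (Fin d) (Fin d) ℂ) (μ : ℂ) :
    M.charpoly.eval μ = (Matrix.diagonal (fun _ => μ) - M).det := by
  rw [Matrix.charpoly, ← Polynomial.coe_evalRingHom, RingHom.map_det]
  congr 1
  ext i j
  rcases eq_or_ne i j with rfl | h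
  · simp [Matrix.charmatrix_apply_eq]
  · simp [Matrix.charmatrix_apply_ne _ _ _ h, Matrix.diagonal_apply_ne _ h]

lemma aux_exists_eigenvector (M : Matrix (Fin d) (Fin d) ℂ) (μ : ℂ)
    (h : M.charpoly.eval μ = 0) :
    ∃ v : Fin d → ℂ, v ≠ 0 ∧ M *ᵥ v = μ • v := by
  rw [aux_eval_charpoly] at h
  obtain ⟨v, hv, hMv⟩ := Matrix.exists_mulVec_eq_zero_iff.mpr h
  refine ⟨v, hv, ?_⟩
  rw [Matrix.sub_mulVec] at hMv
  have hdiag : Matrix.diagonal (fun _ : Fin d => μ) *ᵥ v = μ • v := by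
    funext k; simp [Matrix.mulVec_diagonal]
  rw [hdiag] at hMv
  linear_combination (norm := module) -hMv

lemma aux_exp_eigen (M : Matrix (Fin d) (Fin d) ℂ) (v : Fin d → ℂ) (μ : ℂ)
    (h : M *ᵥ v = μ • v) :
    (NormedSpace.exp M) *ᵥ v = Complex.exp μ • v := by
  have hpow : ∀ n : ℕ, (M ^ n) *ᵥ v = (μ ^ n) • v := by
    intro n
    induction n with
    | zero => simp
    | succ n ih =>
      rw [pow_succ, ← Matrix.mulVec_mulVec, h, Matrix.mulVec_smul, ih, smul_smul,
        mul_comm, ← pow_succ]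
  let L : Matrix (Fin d) (Fin d) ℂ →ₗ[ℂ] (Fin d → ℂ) :=
    { toFun := fun N => N *ᵥ v
      map_add' := fun a b => Matrix.add_mulVec a b v
      map_smul' := fun c N => Matrix.smul_mulVec c N v }
  have hL : Continuous L := LinearMap.continuous_of_finiteDimensional L
  have hsum := NormedSpace.expSeries_summable' (𝕂 := ℂ) M
  rw [NormedSpace.exp_eq_tsum ℂ]
  have key : (∑' n : ℕ, ((n.factorial : ℂ))⁻¹ • M ^ n) *ᵥ v
      = ∑' n : ℕ, (((n.factorial : ℂ))⁻¹ • M ^ n) *ᵥ v :=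
    ((hsum.hasSum.map L.toAddMonoidHom hL).tsum_eq).symm
  rw [key]
  have h2 : ∀ n : ℕ, (((n.factorial : ℂ))⁻¹ • M ^ n) *ᵥ v
      = (((n.factorial : ℂ))⁻¹ * μ ^ n) • v := fun n => by
    rw [Matrix.smul_mulVec, hpow n, smul_smul]
  rw [tsum_congr h2]
  have hsummable : Summable fun n : ℕ => ((n.factorial : ℂ))⁻¹ * μ ^ n := by
    simpa [smul_eq_mul] using NormedSpace.expSeries_summable' (𝕂 := ℂ) μ
  rw [Summable.tsum_smul_const hsummable]
  congr 1
  rw [Complex.exp_eq_exp_ℂ, NormedSpace.exp_eq_tsum ℂ]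
  simp [smul_eq_mul]

lemma aux_exp_map (B : Matrix (Fin d) (Fin d) ℝ) :
    (NormedSpace.exp B).map (algebraMap ℝ ℂ)
      = NormedSpace.exp (B.map (algebraMap ℝ ℂ)) := by
  have hf : Continuous ((algebraMap ℝ ℂ).mapMatrix :
      Matrix (Fin d) (Fin d) ℝ →+* Matrix (Fin d) (Fin d) ℂ) :=
    continuous_id.matrix_map (continuous_algebraMap ℝ ℂ)
  have h := NormedSpace.map_exp ((algebraMap ℝ ℂ).mapMatrix :
      Matrix (Fin d) (Fin d) ℝ →+* Matrix (Fin d) (Fin d) ℂ) hf B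
  simp only [RingHom.mapMatrix_apply] at h
  exact h

end aux

theorem statement19 (d : ℕ) (hd : 1 ≤ d) (A Q : Matrix (Fin d) (Fin d) ℝ)
    (hQ : Q.PosSemidef)
    -- Hypothesis H: ∫₀^∞ tr(e^{sA}Qe^{sAᵀ}) ds < ∞ and Q∞ is invertible
    (htr : IntegrableOn (fun s : ℝ => (QsMat A Q s).trace) (Set.Ioi 0))
    (hinv : IsUnit (QinfMat A Q).det)
    (hcomm : A * Q = Q * Aᵀ) :
    IsUnit Q.det ∧
      (∀ lam : ℂ, lam ∈ ((A.charpoly).map (algebraMap ℝ ℂ)).roots → lam.re < 0) ∧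
      (∀ v : Fin d → ℝ, A.mulVec v = 0 → v = 0) := by
  have hint : ∀ i j, IntegrableOn (fun s => QsMat A Q s i j) (Set.Ioi 0) :=
    aux_entry_integrable A Q hQ htr
  -- Part 1 : Q is invertible
  have hQdet : IsUnit Q.det := by
    by_contra hQdet
    have hdet0 : Q.det = 0 := by
      by_contra h0
      exact hQdet (isUnit_iff_ne_zero.mpr h0)
    obtain ⟨v, hv0, hQv⟩ := Matrix.exists_mulVec_eq_zero_iff.mpr hdet0
    have hQsv : ∀ s : ℝ, QsMat A Q s *ᵥ v = 0 := fun s => by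
      rw [aux_QsMat_eq A Q hcomm s, ← Matrix.mulVec_mulVec, hQv, Matrix.mulVec_zero]
    have hQiv : QinfMat A Q *ᵥ v = 0 := by
      rw [aux_Qinf_mulVec A Q hQ htr v]
      funext i
      simp [hQsv]
    have hz : (QinfMat A Q).det = 0 := Matrix.exists_mulVec_eq_zero_iff.mp ⟨v, hv0, hQiv⟩
    rw [hz] at hinv
    exact not_isUnit_zero hinv
  -- Part 2 : eigenvalues have negative real part
  have hEig : ∀ lam : ℂ, lam ∈ ((A.charpoly).map (algebraMap ℝ ℂ)).roots → lam.re < 0 := by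
    intro lam hmem
    set M := A.map (algebraMap ℝ ℂ) with hM
    have hroot : M.charpoly.eval lam = 0 := by
      have h := (Polynomial.mem_roots'.mp hmem).2
      rw [hM, Matrix.charpoly_map]
      exact h
    obtain ⟨v, hv0, heig⟩ := aux_exists_eigenvector M lam hroot
    obtain ⟨i0, hi0p⟩ := Function.ne_iff.mp hv0
    have hi0 : v i0 ≠ 0 := by simpa using hi0p
    have hexp : ∀ s : ℝ, NormedSpace.exp ((2 * s) • A) = QsMat A Q s * Q⁻¹ := fun s => by
      rw [aux_QsMat_eq A Q hcomm s, Matrix.mul_nonsing_inv_cancel_right _ _ hQdet]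
    have hEint : ∀ j, IntegrableOn
        (fun s : ℝ => NormedSpace.exp ((2 * s) • A) i0 j) (Set.Ioi 0) volume := by
      intro j
      have he : (fun s : ℝ => NormedSpace.exp ((2 * s) • A) i0 j)
          = fun s : ℝ => ∑ k, QsMat A Q s i0 k * Q⁻¹ k j := by
        funext s; rw [hexp s, Matrix.mul_apply]
      rw [he]
      exact integrable_finset_sum _ fun k _ => (hint i0 k).mul_const _
    set F : ℝ → ℂ :=
      fun s => ∑ k, ((NormedSpace.exp ((2 * s) • A) i0 k : ℝ) : ℂ) * v k with hF
    have hFint : IntegrableOn F (Set.Ioi 0) volume :=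
      integrable_finset_sum _ fun k _ => ((hEint k).ofReal).mul_const _
    have hFeq : ∀ s : ℝ, F s = Complex.exp (((2 * s : ℝ) : ℂ) * lam) * v i0 := by
      intro s
      have hmap : ((2 * s) • A).map (algebraMap ℝ ℂ) = (((2 * s : ℝ)) : ℂ) • M := by
        ext i j
        simp [hM, Matrix.map_apply, Complex.ofReal_mul]
      have heig2 : ((((2 * s : ℝ)) : ℂ) • M) *ᵥ v = ((((2 * s : ℝ)) : ℂ) * lam) • v := by
        rw [Matrix.smul_mulVec, heig, smul_smul]
      have h1 : F s = ((NormedSpace.exp ((2 * s) • A)).map (algebraMap ℝ ℂ) *ᵥ v) i0 := by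
        simp [hF, Matrix.mulVec, dotProduct, Matrix.map_apply]
      rw [h1, aux_exp_map, hmap, aux_exp_eigen _ _ _ heig2]
      simp
    by_contra hre
    push_neg at hre
    have hnorm : ∀ s ∈ Set.Ioi (0:ℝ), ‖v i0‖ ≤ ‖F s‖ := by
      intro s hs
      rw [hFeq s, norm_mul]
      have hreval : ((((2 * s : ℝ)) : ℂ) * lam).re = 2 * s * lam.re := by
        simp [Complex.mul_re]
      have hne : ‖Complex.exp ((((2 * s : ℝ)) : ℂ) * lam)‖ = Real.exp (2 * s * lam.re) := by
        rw [Complex.norm_exp, hreval]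
      rw [hne]
      have h1 : (1 : ℝ) ≤ Real.exp (2 * s * lam.re) :=
        Real.one_le_exp (by nlinarith [Set.mem_Ioi.mp hs])
      nlinarith [norm_nonneg (v i0)]
    have hconst : IntegrableOn (fun _ : ℝ => ‖v i0‖) (Set.Ioi 0) volume := by
      refine MeasureTheory.Integrable.mono hFint.norm aestronglyMeasurable_const ?_
      refine (ae_restrict_iff' measurableSet_Ioi).mpr (Filter.Eventually.of_forall
        fun s hs => ?_)
      simpa [norm_norm] using hnorm s hs
    rcases (integrableOn_const_iff (C := ‖v i0‖)).mp hconst with h | h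
    · exact hi0 (norm_eq_zero.mp (enorm_eq_zero.mp h))
    · rw [Real.volume_Ioi] at h; exact absurd h (by simp)
  refine ⟨hQdet, hEig, ?_⟩
  intro v hAv
  by_contra hv0
  have hdetA : A.det = 0 := Matrix.exists_mulVec_eq_zero_iff.mp ⟨v, hv0, hAv⟩
  have hc0 : A.charpoly.coeff 0 = 0 := by
    have h := Matrix.det_eq_sign_charpoly_coeff A
    rw [hdetA] at h
    have hne : ((-1 : ℝ)) ^ (Fintype.card (Fin d)) ≠ 0 := pow_ne_zero _ (by norm_num)
    exact (mul_eq_zero.mp h.symm).resolve_left hne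
  have hmem : (0 : ℂ) ∈ ((A.charpoly).map (algebraMap ℝ ℂ)).roots := by
    rw [Polynomial.mem_roots']
    refine ⟨((A.charpoly_monic).map _).ne_zero, ?_⟩
    rw [Polynomial.IsRoot.def, Polynomial.eval_map, Polynomial.eval₂_at_zero, hc0, map_zero]
  have := hEig 0 hmem
  simp at this
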